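/- Let ℓ ≥ 2 and let p_1 < p_2 < … < p_ℓ be primes with p_k > 2ℓ·ln(2ℓ) for every k. For each integer i ≥ 0 define S_i = { 1 + (p_1 + … + p_{j−1}) + (i mod p_j) : j ∈ {1,…,ℓ} }. Then for every integer i ≥ 1, Σ_{j=0}^{i−1} 2^{|S_i ∩ S_j|} ≤ i · ln(2ℓ)/(ln(2ℓ) − 1). -/

import Mathlib

open Finset

/-- Counting lemma: number of j < i congruent to i mod m is at most i/m. -/
lemma count_mod_le (i m : ℕ) :
    ((Finset.range i).filter (fun j => j % m = i % m)).card ≤ i / m := by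
  classical
  have h := Finset.card_le_card_of_injOn
    (s := (Finset.range i).filter (fun j => j % m = i % m))
    (t := Finset.range (i / m))
    (fun j => (i - j) / m - 1) ?_ ?_
  · simpa using h
  · intro j hj
    simp only [mem_coe, mem_filter, mem_range] at hj ⊢
    obtain ⟨hji, hmod⟩ := hj
    have hdvd : m ∣ i - j := (Nat.modEq_iff_dvd' hji.le).mp hmod
    obtain ⟨t, ht⟩ := hdvd
    have hm : 0 < m := by
      rcases Nat.eq_zero_or_pos m with h | h
      · subst h; omega
      · exact h
    have ht1 : 1 ≤ t := by
      rcases Nat.eq_zero_or_pos t with h | h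
      · subst h; omega
      · exact h
    have htq : t ≤ i / m := Nat.le_div_iff_mul_le hm |>.mpr (by rw [Nat.mul_comm]; omega)
    have : (i - j) / m = t := by rw [ht]; exact Nat.mul_div_cancel_left t hm
    rw [this]; exact lt_of_lt_of_le (Nat.sub_lt ht1 Nat.one_pos) htq
  · intro a ha b hb hab
    simp only [coe_filter, Set.mem_setOf_eq, mem_coe, mem_range, mem_filter] at ha hb
    obtain ⟨hai, hamod⟩ := ha
    obtain ⟨hbi, hbmod⟩ := hb
    have hm : 0 < m := by
      rcases Nat.eq_zero_or_pos m with h | h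
      · subst h; omega
      · exact h
    obtain ⟨t, ht⟩ := (Nat.modEq_iff_dvd' hai.le).mp hamod
    obtain ⟨s, hs⟩ := (Nat.modEq_iff_dvd' hbi.le).mp hbmod
    have hta : (i - a) / m = t := by rw [ht]; exact Nat.mul_div_cancel_left t hm
    have htb : (i - b) / m = s := by rw [hs]; exact Nat.mul_div_cancel_left s hm
    simp only [hta, htb] at hab
    have ht1 : 1 ≤ t := by
      rcases Nat.eq_zero_or_pos t with h | h
      · subst h; omega
      · exact h
    have hs1 : 1 ≤ s := by
      rcases Nat.eq_zero_or_pos s with h | h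
      · subst h; omega
      · exact h
    have : t = s := by omega
    subst this
    omega

theorem stmt7 (ℓ : ℕ) (hℓ : 2 ≤ ℓ) (p : Fin ℓ → ℕ)
    (hp : ∀ k, (p k).Prime) (hmono : StrictMono p)
    (hbig : ∀ k, (2 * ℓ : ℝ) * Real.log (2 * ℓ) < p k)
    (S : ℕ → Finset ℕ)
    (hS : ∀ i, S i = Finset.image (fun j : Fin ℓ =>
        1 + (∑ k ∈ Finset.univ.filter (fun k => k < j), p k) + i % p j) Finset.univ)
    (i : ℕ) (hi : 1 ≤ i) :
    (∑ j ∈ Finset.range i, (2 : ℝ) ^ ((S i ∩ S j).card))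
      ≤ i * Real.log (2 * ℓ) / (Real.log (2 * ℓ) - 1) := by
  classical
  set L := Real.log (2 * ℓ) with hLdef
  have hℓ4 : (4:ℝ) ≤ 2 * ℓ := by
    have : (2:ℝ) ≤ ℓ := by exact_mod_cast hℓ
    linarith
  have hL1 : 1 < L := by
    rw [hLdef, show (1:ℝ) = Real.log (Real.exp 1) by rw [Real.log_exp]]
    apply Real.log_lt_log (Real.exp_pos 1)
    have := Real.exp_one_lt_d9
    linarith
  have hLpos : 0 < L := by linarith
  have hppos : ∀ k, 0 < (p k : ℝ) := by
    intro k
    exact_mod_cast (hp k).pos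
  -- the base of each block
  set B : Fin ℓ → ℕ := fun j => ∑ k ∈ Finset.univ.filter (fun k => k < j), p k with hB
  have hblock : ∀ j j' : Fin ℓ, j < j' → B j + p j ≤ B j' := by
    intro j j' hjj'
    have hsub : insert j (Finset.univ.filter (fun k => k < j)) ⊆
        Finset.univ.filter (fun k => k < j') := by
      intro k hk
      simp only [mem_insert, mem_filter, mem_univ, true_and] at hk ⊢
      rcases hk with h | h
      · subst h; exact hjj'
      · exact h.trans hjj'
    have hnotmem : j ∉ Finset.univ.filter (fun k : Fin ℓ => k < j) := by simp
    calc B j + p j = ∑ k ∈ insert j (Finset.univ.filter (fun k => k < j)), p k := by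
          rw [Finset.sum_insert hnotmem]; ring
      _ ≤ B j' := Finset.sum_le_sum_of_subset hsub
  have hSf : ∀ n, S n = Finset.image (fun j : Fin ℓ => 1 + B j + n % p j) Finset.univ :=
    fun n => hS n
  -- intersection cardinality
  have hinter : ∀ j : ℕ, (S i ∩ S j).card
      = (Finset.univ.filter (fun k : Fin ℓ => i % p k = j % p k)).card := by
    intro j
    have heq : S i ∩ S j
        = Finset.image (fun k : Fin ℓ => 1 + B k + i % p k)
            (Finset.univ.filter (fun k : Fin ℓ => i % p k = j % p k)) := by
      ext x
      simp only [mem_inter, hSf, mem_image, mem_filter, mem_univ, true_and]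
      constructor
      · rintro ⟨⟨k, hk⟩, ⟨k', hk'⟩⟩
        have hkk' : k = k' := by
          by_contra hne
          rcases lt_or_gt_of_ne hne with h | h
          · have h1 : i % p k < p k := Nat.mod_lt _ (hp k).pos
            have h2 := hblock k k' h
            omega
          · have h1 : j % p k' < p k' := Nat.mod_lt _ (hp k').pos
            have h2 := hblock k' k h
            omega
        subst hkk'
        exact ⟨k, by omega, hk⟩
      · rintro ⟨k, hmod, hk⟩
        exact ⟨⟨k, hk⟩, ⟨k, by omega⟩⟩
    rw [heq, Finset.card_image_of_injOn]
    intro a _ b _ hab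
    have hab' : 1 + B a + i % p a = 1 + B b + i % p b := hab
    by_contra hne
    rcases lt_or_gt_of_ne hne with h | h
    · have h1 : i % p a < p a := Nat.mod_lt _ (hp a).pos
      have h2 := hblock a b h
      omega
    · have h1 : i % p b < p b := Nat.mod_lt _ (hp b).pos
      have h2 := hblock b a h
      omega
  -- expand 2^card as a sum of indicators over subsets
  have hexpand : ∀ j : ℕ, (2 : ℝ) ^ ((S i ∩ S j).card)
      = ∑ K ∈ (Finset.univ : Finset (Fin ℓ)).powerset,
          (if ∀ k ∈ K, i % p k = j % p k then (1:ℝ) else 0) := by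
    intro j
    rw [Finset.sum_boole]
    have h2 : (Finset.univ : Finset (Fin ℓ)).powerset.filter
          (fun K => ∀ k ∈ K, i % p k = j % p k)
        = (Finset.univ.filter (fun k : Fin ℓ => i % p k = j % p k)).powerset := by
      ext K
      simp only [mem_filter, mem_powerset, Finset.subset_iff, mem_filter, mem_univ, true_and]
      tauto
    rw [h2, Finset.card_powerset, hinter j]
    push_cast
    ring
  rw [Finset.sum_congr rfl (fun j _ => hexpand j), Finset.sum_comm]
  -- bound each inner sum
  have hcount : ∀ K ∈ (Finset.univ : Finset (Fin ℓ)).powerset,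
      (∑ j ∈ Finset.range i, (if ∀ k ∈ K, i % p k = j % p k then (1:ℝ) else 0))
        ≤ (i : ℝ) * ∏ k ∈ K, (1 / (p k : ℝ)) := by
    intro K _
    rw [Finset.sum_boole]
    set m : ℕ := ∏ k ∈ K, p k with hm
    have hmpos : 0 < m := Finset.prod_pos (fun k _ => (hp k).pos)
    have hsub : (Finset.range i).filter (fun j => ∀ k ∈ K, i % p k = j % p k)
        ⊆ (Finset.range i).filter (fun j => j % m = i % m) := by
      intro j hj
      simp only [mem_filter, mem_range] at hj ⊢
      obtain ⟨hji, hmod⟩ := hj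
      refine ⟨hji, ?_⟩
      have hdvd : ∀ k ∈ K, p k ∣ i - j := by
        intro k hk
        exact (Nat.modEq_iff_dvd' hji.le).mp (hmod k hk).symm
      have hprod : m ∣ i - j := by
        have himg : ∏ q ∈ K.image p, q = m := by
          rw [hm]; exact Finset.prod_image (fun a _ b _ h => hmono.injective h)
        rw [← himg]
        apply Finset.prod_primes_dvd
        · intro q hq
          simp only [mem_image] at hq
          obtain ⟨k, _, hk⟩ := hq
          rw [← hk]; exact (hp k).prime
        · intro q hq
          simp only [mem_image] at hq
          obtain ⟨k, hkK, hk⟩ := hq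
          rw [← hk]; exact hdvd k hkK
      exact ((Nat.modEq_iff_dvd' hji.le).mpr hprod : j ≡ i [MOD m])
    calc (((Finset.range i).filter (fun j => ∀ k ∈ K, i % p k = j % p k)).card : ℝ)
        ≤ (((Finset.range i).filter (fun j => j % m = i % m)).card : ℝ) := by
          exact_mod_cast Finset.card_le_card hsub
      _ ≤ ((i / m : ℕ) : ℝ) := by exact_mod_cast count_mod_le i m
      _ ≤ (i : ℝ) / (m : ℝ) := Nat.cast_div_le
      _ = (i : ℝ) * ∏ k ∈ K, (1 / (p k : ℝ)) := by
          rw [hm]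
          push_cast
          rw [div_eq_mul_inv, ← Finset.prod_inv_distrib]
          congr 1
          exact Finset.prod_congr rfl (fun k _ => (one_div _).symm)
  have hexp : ∀ k : Fin ℓ, (1 / (p k : ℝ) + 1) ≤ Real.exp (1 / (2 * ℓ * L)) := by
    intro k
    have h1 : (0:ℝ) < 2 * ℓ * L := by positivity
    have h2 : (2 * ℓ : ℝ) * L < p k := hbig k
    have h3 : 1 / (p k : ℝ) ≤ 1 / (2 * ℓ * L) := by
      apply one_div_le_one_div_of_le h1 h2.le
    calc 1 / (p k : ℝ) + 1 ≤ 1 / (2 * ℓ * L) + 1 := by linarith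
      _ ≤ Real.exp (1 / (2 * ℓ * L)) := Real.add_one_le_exp _
  have hprodbound : ∏ k : Fin ℓ, (1 / (p k : ℝ) + 1) ≤ L / (L - 1) := by
    have hℓpos : (0:ℝ) < ℓ := by positivity
    have step1 : ∏ k : Fin ℓ, (1 / (p k : ℝ) + 1)
        ≤ ∏ k : Fin ℓ, Real.exp (1 / (2 * ℓ * L)) := by
      apply Finset.prod_le_prod
      · intro k _; positivity
      · intro k _; exact hexp k
    have step2 : ∏ k : Fin ℓ, Real.exp (1 / (2 * ℓ * L)) = Real.exp (ℓ * (1 / (2 * ℓ * L))) := by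
      rw [Finset.prod_const, Finset.card_univ, Fintype.card_fin, ← Real.exp_nat_mul]
    have step3 : (ℓ : ℝ) * (1 / (2 * ℓ * L)) = 1 / (2 * L) := by
      field_simp
    have step4 : Real.exp (1 / (2 * L)) ≤ Real.exp (1 / L) := by
      apply Real.exp_le_exp.mpr
      rw [div_le_div_iff₀ (by positivity) (by positivity)]
      linarith
    have step5 : Real.exp (1 / L) ≤ L / (L - 1) := by
      have hx : (0:ℝ) < 1 - 1 / L := by
        have : 1 / L < 1 := by
          rw [div_lt_one hLpos]; exact hL1
        linarith
      have h6 : 1 - 1 / L ≤ Real.exp (-(1 / L)) := by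
        have := Real.add_one_le_exp (-(1 / L))
        linarith
      have h7 : Real.exp (1 / L) ≤ 1 / (1 - 1 / L) := by
        rw [le_div_iff₀ hx]
        calc Real.exp (1 / L) * (1 - 1 / L)
            ≤ Real.exp (1 / L) * Real.exp (-(1 / L)) := by
              apply mul_le_mul_of_nonneg_left h6 (Real.exp_pos _).le
          _ = 1 := by rw [← Real.exp_add]; simp
      have h8 : 1 / (1 - 1 / L) = L / (L - 1) := by
        field_simp
      linarith [h7, h8.symm.le]
    calc ∏ k : Fin ℓ, (1 / (p k : ℝ) + 1)
        ≤ Real.exp (ℓ * (1 / (2 * ℓ * L))) := step2 ▸ step1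
      _ = Real.exp (1 / (2 * L)) := by rw [step3]
      _ ≤ Real.exp (1 / L) := step4
      _ ≤ L / (L - 1) := step5
  calc ∑ K ∈ (Finset.univ : Finset (Fin ℓ)).powerset,
        (∑ j ∈ Finset.range i, (if ∀ k ∈ K, i % p k = j % p k then (1:ℝ) else 0))
      ≤ ∑ K ∈ (Finset.univ : Finset (Fin ℓ)).powerset,
          (i : ℝ) * ∏ k ∈ K, (1 / (p k : ℝ)) := Finset.sum_le_sum hcount
    _ = (i : ℝ) * ∏ k : Fin ℓ, (1 / (p k : ℝ) + 1) := by
        rw [← Finset.mul_sum, Finset.prod_add]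
        simp
    _ ≤ (i : ℝ) * (L / (L - 1)) := by
        apply mul_le_mul_of_nonneg_left hprodbound (by positivity)
    _ = (i : ℝ) * L / (L - 1) := by ring
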